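/- Consider a reversible reaction graph on c vertices (finite edge set E, maps t, h : E → Fin c with t e ≠ h e, positive constants k⁺, k⁻ : E → ℝ, and Laplacian L as below), together with a complex composition matrix Z (a real m×c matrix). Let ρ : Fin c → ℝ be strictly positive with the kernel of v ↦ L *ᵥ v equal to the span of ρ. Then the network is detailed-balanced, i.e. there exists w : Fin m → ℝ with Real.log (k⁺ e / k⁻ e) = (Zᵀ *ᵥ w) (h e) − (Zᵀ *ᵥ w) (t e) for all e, if and only if it is both formally balanced (there exists x : Fin c → ℝ with Real.log (k⁺ e / k⁻ e) = x (h e) − x (t e) for all e) and complex-balanced (there exists μ : Fin m → ℝ with L *ᵥ (fun i => Real.exp ((Zᵀ *ᵥ μ) i)) = 0). (Corollary 2 of the paper, proved in van der Schaft et al. following Dickenstein–Pérez Millán.) -/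

import Mathlib

open Matrix

/-- The weighted Laplacian matrix of a reversible reaction graph on `c` vertices,
with edge set `E`, tail and head maps `t, h`, and forward and reverse reaction
constants `kp, km`. -/
def reactionLaplacian (c : ℕ) {E : Type*} [Fintype E]
    (t h : E → Fin c) (kp km : E → ℝ) : Matrix (Fin c) (Fin c) ℝ :=
  fun i j =>
    if i = j then
      (∑ e ∈ Finset.univ.filter (fun e => t e = j), kp e) +
        (∑ e ∈ Finset.univ.filter (fun e => h e = j), km e)
    else
      -((∑ e ∈ Finset.univ.filter (fun e => t e = j ∧ h e = i), kp e) +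
        (∑ e ∈ Finset.univ.filter (fun e => t e = i ∧ h e = j), km e))

lemma lap_apply_mulVec (c : ℕ) {E : Type*} [Fintype E]
    (t h : E → Fin c) (hth : ∀ e, t e ≠ h e) (kp km : E → ℝ)
    (v : Fin c → ℝ) (i : Fin c) :
    (reactionLaplacian c t h kp km *ᵥ v) i
      = ∑ e, ((if t e = i then kp e * v (t e) - km e * v (h e) else 0)
           - (if h e = i then kp e * v (t e) - km e * v (h e) else 0)) := by
  classical
  have step1 : ∀ j, reactionLaplacian c t h kp km i j * v j
      = ∑ e, (((if t e = j then kp e else 0) + (if h e = j then km e else 0))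
              * (if i = j then v j else 0)
        - ((if t e = j ∧ h e = i then kp e else 0)
            + (if t e = i ∧ h e = j then km e else 0)) * v j) := by
    intro j
    by_cases hij : i = j
    · subst hij
      simp only [reactionLaplacian, if_pos rfl, Finset.sum_filter]
      have h1 : ∀ e, (if t e = i ∧ h e = i then kp e else 0) = 0 := by
        intro e; rw [if_neg]; rintro ⟨h1, h2⟩; exact hth e (h1.trans h2.symm)
      have h2 : ∀ e, (if t e = i ∧ h e = i then km e else 0) = 0 := by
        intro e; rw [if_neg]; rintro ⟨h1, h2⟩; exact hth e (h1.trans h2.symm)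
      simp only [h1, h2, add_zero, zero_mul, sub_zero, ← Finset.sum_add_distrib,
        ← Finset.sum_mul, if_true]
    · simp only [reactionLaplacian, if_neg hij, Finset.sum_filter, mul_zero,
        zero_sub, ← Finset.sum_add_distrib, Finset.sum_neg_distrib, neg_mul,
        ← Finset.sum_mul]
  have step2 : ∀ e : E,
      ∑ j, (((if t e = j then kp e else 0) + (if h e = j then km e else 0))
              * (if i = j then v j else 0)
        - ((if t e = j ∧ h e = i then kp e else 0)
            + (if t e = i ∧ h e = j then km e else 0)) * v j)
      = ((if t e = i then kp e * v (t e) - km e * v (h e) else 0)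
           - (if h e = i then kp e * v (t e) - km e * v (h e) else 0)) := by
    intro e
    rw [Finset.sum_sub_distrib]
    simp only [add_mul, Finset.sum_add_distrib]
    have s1 : ∑ j, (if t e = j then kp e else 0) * (if i = j then v j else 0)
        = if t e = i then kp e * v (t e) else 0 := by
      rw [Finset.sum_eq_single (t e)]
      · by_cases hti : t e = i
        · rw [if_pos rfl, if_pos hti.symm, hti]; simp
        · rw [if_pos rfl, if_neg (fun hh => hti hh.symm), mul_zero, if_neg hti]
      · intro j _ hj; rw [if_neg (fun hh => hj hh.symm), zero_mul]
      · intro hmem; exact absurd (Finset.mem_univ _) hmem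
    have s2 : ∑ j, (if h e = j then km e else 0) * (if i = j then v j else 0)
        = if h e = i then km e * v (h e) else 0 := by
      rw [Finset.sum_eq_single (h e)]
      · by_cases hti : h e = i
        · rw [if_pos rfl, if_pos hti.symm, hti]; simp
        · rw [if_pos rfl, if_neg (fun hh => hti hh.symm), mul_zero, if_neg hti]
      · intro j _ hj; rw [if_neg (fun hh => hj hh.symm), zero_mul]
      · intro hmem; exact absurd (Finset.mem_univ _) hmem
    have s3 : ∑ j, (if t e = j ∧ h e = i then kp e else 0) * v j
        = if h e = i then kp e * v (t e) else 0 := by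
      rw [Finset.sum_eq_single (t e)]
      · by_cases hhi : h e = i
        · rw [if_pos ⟨rfl, hhi⟩, if_pos hhi]
        · rw [if_neg (fun hh => hhi hh.2), zero_mul, if_neg hhi]
      · intro j _ hj; rw [if_neg (fun hh => hj hh.1.symm), zero_mul]
      · intro hmem; exact absurd (Finset.mem_univ _) hmem
    have s4 : ∑ j, (if t e = i ∧ h e = j then km e else 0) * v j
        = if t e = i then km e * v (h e) else 0 := by
      rw [Finset.sum_eq_single (h e)]
      · by_cases hti : t e = i
        · rw [if_pos ⟨hti, rfl⟩, if_pos hti]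
        · rw [if_neg (fun hh => hti hh.1), zero_mul, if_neg hti]
      · intro j _ hj; rw [if_neg (fun hh => hj hh.2.symm), zero_mul]
      · intro hmem; exact absurd (Finset.mem_univ _) hmem
    rw [s1, s2, s3, s4]
    by_cases h1 : t e = i <;> by_cases h2 : h e = i <;>
      simp [h1, h2] <;> ring
  calc (reactionLaplacian c t h kp km *ᵥ v) i
      = ∑ j, reactionLaplacian c t h kp km i j * v j := rfl
    _ = ∑ j, ∑ e, (((if t e = j then kp e else 0) + (if h e = j then km e else 0))
              * (if i = j then v j else 0)
        - ((if t e = j ∧ h e = i then kp e else 0)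
            + (if t e = i ∧ h e = j then km e else 0)) * v j) := by
          exact Finset.sum_congr rfl (fun j _ => step1 j)
    _ = ∑ e, ∑ j, (((if t e = j then kp e else 0) + (if h e = j then km e else 0))
              * (if i = j then v j else 0)
        - ((if t e = j ∧ h e = i then kp e else 0)
            + (if t e = i ∧ h e = j then km e else 0)) * v j) := Finset.sum_comm
    _ = _ := Finset.sum_congr rfl (fun e _ => step2 e)

lemma lap_balanced_ker (c : ℕ) {E : Type*} [Fintype E]
    (t h : E → Fin c) (hth : ∀ e, t e ≠ h e) (kp km : E → ℝ)
    (v : Fin c → ℝ) (hv : ∀ e, kp e * v (t e) = km e * v (h e)) :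
    reactionLaplacian c t h kp km *ᵥ v = 0 := by
  funext i
  rw [lap_apply_mulVec c t h hth kp km v i]
  simp [hv, sub_eq_zero.mpr (hv _)]

theorem detailed_balanced_iff_formally_balanced_and_complex_balanced
    (c m : ℕ) (hc : 0 < c) (hm : 0 < m) (E : Type*) [Fintype E]
    (t h : E → Fin c) (hth : ∀ e, t e ≠ h e)
    (kp km : E → ℝ) (hkp : ∀ e, 0 < kp e) (hkm : ∀ e, 0 < km e)
    (Z : Matrix (Fin m) (Fin c) ℝ)
    (ρ : Fin c → ℝ) (hρ : ∀ i, 0 < ρ i)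
    (hker : LinearMap.ker (reactionLaplacian c t h kp km).mulVecLin =
      Submodule.span ℝ {ρ}) :
    (∃ w : Fin m → ℝ, ∀ e,
        Real.log (kp e / km e) = (Zᵀ *ᵥ w) (h e) - (Zᵀ *ᵥ w) (t e)) ↔
      ((∃ x : Fin c → ℝ, ∀ e, Real.log (kp e / km e) = x (h e) - x (t e)) ∧
        (∃ μ : Fin m → ℝ,
          reactionLaplacian c t h kp km *ᵥ (fun i => Real.exp ((Zᵀ *ᵥ μ) i)) = 0)) := by
  have key : ∀ x : Fin c → ℝ, (∀ e, Real.log (kp e / km e) = x (h e) - x (t e)) →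
      ∀ e, kp e * Real.exp (x (t e)) = km e * Real.exp (x (h e)) := by
    intro x hx e
    have hpos : 0 < kp e / km e := div_pos (hkp e) (hkm e)
    have := Real.exp_log hpos
    rw [hx e] at this
    rw [Real.exp_sub] at this
    have hkm' := (hkm e).ne'
    have het : Real.exp (x (t e)) ≠ 0 := (Real.exp_pos _).ne'
    field_simp at this ⊢
    nlinarith [this]
  constructor
  · rintro ⟨w, hw⟩
    refine ⟨⟨Zᵀ *ᵥ w, hw⟩, ⟨w, ?_⟩⟩
    exact lap_balanced_ker c t h hth kp km _ (key (Zᵀ *ᵥ w) hw)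
  · rintro ⟨⟨x, hx⟩, ⟨μ, hμ⟩⟩
    -- exp ∘ x is in the kernel
    have h1 : reactionLaplacian c t h kp km *ᵥ (fun i => Real.exp (x i)) = 0 :=
      lap_balanced_ker c t h hth kp km _ (key x hx)
    have mem1 : (fun i => Real.exp (x i)) ∈
        LinearMap.ker (reactionLaplacian c t h kp km).mulVecLin := by
      simpa [LinearMap.mem_ker, mulVecLin_apply] using h1
    have mem2 : (fun i => Real.exp ((Zᵀ *ᵥ μ) i)) ∈
        LinearMap.ker (reactionLaplacian c t h kp km).mulVecLin := by
      simpa [LinearMap.mem_ker, mulVecLin_apply] using hμ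
    rw [hker, Submodule.mem_span_singleton] at mem1 mem2
    obtain ⟨a, ha⟩ := mem1
    obtain ⟨b, hb⟩ := mem2
    set i0 : Fin c := ⟨0, hc⟩
    have ha' : ∀ i, a * ρ i = Real.exp (x i) := by
      intro i; exact congrFun ha i
    have hb' : ∀ i, b * ρ i = Real.exp ((Zᵀ *ᵥ μ) i) := by
      intro i; exact congrFun hb i
    have hapos : 0 < a := by
      have := ha' i0
      nlinarith [Real.exp_pos (x i0), hρ i0]
    have hbpos : 0 < b := by
      have := hb' i0
      nlinarith [Real.exp_pos ((Zᵀ *ᵥ μ) i0), hρ i0]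
    -- x i = (Zᵀ μ) i + log (a / b)
    have hxz : ∀ i, x i = (Zᵀ *ᵥ μ) i + Real.log (a / b) := by
      intro i
      have h1 : Real.exp (x i) = (a / b) * Real.exp ((Zᵀ *ᵥ μ) i) := by
        rw [← ha' i, ← hb' i]; field_simp
      have h2 : Real.exp (x i) = Real.exp ((Zᵀ *ᵥ μ) i + Real.log (a / b)) := by
        rw [Real.exp_add, Real.exp_log (div_pos hapos hbpos), h1]; ring
      exact Real.exp_injective h2
    refine ⟨μ, fun e => ?_⟩
    rw [hx e, hxz (h e), hxz (t e)]
    ring
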